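/- Let X be an abelian Polish group. Every Borel set A ⊆ X belonging to F(X) (i.e., such that for every compact set K ⊆ X there exists x ∈ X with K + x ⊆ A) is not Haar null in X. -/

import Mathlib

open MeasureTheory Set
open scoped ENNReal

/-- A set in a topological abelian group is *Haar meager* if there is a Borel set `B ⊇ A`,
a nonempty compact metric space `K` and a continuous `f : K → G` such that `f ⁻¹' (B + x)`
is meager in `K` for every `x ∈ G`. -/
def IsHaarMeager {G : Type*} [TopologicalSpace G] [AddCommGroup G] (A : Set G) : Prop :=
  ∃ B : Set G, A ⊆ B ∧ MeasurableSet[borel G] B ∧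
    ∃ (K : Type) (_ : MetricSpace K) (_ : CompactSpace K) (_ : Nonempty K) (f : K → G),
      Continuous f ∧ ∀ x : G, IsMeagre (f ⁻¹' ((fun b => b + x) '' B))

/-- A set in a topological abelian group is *Haar null* if there is a Borel probability
measure `μ` and a Borel set `B ⊇ A` with `μ (x + B) = 0` for every `x ∈ G`. -/
def IsHaarNull {G : Type*} [TopologicalSpace G] [AddCommGroup G] (A : Set G) : Prop :=
  ∃ μ : @Measure G (borel G), @IsProbabilityMeasure G (borel G) μ ∧
    ∃ B : Set G, A ⊆ B ∧ MeasurableSet[borel G] B ∧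
      ∀ x : G, μ ((fun b => x + b) '' B) = 0


/-- Ulam's theorem: a probability measure on a complete separable metric space gives
positive measure to some compact set. -/
theorem exists_isCompact_measure_ne_zero {X : Type*} [MetricSpace X] [CompleteSpace X]
    [SecondCountableTopology X] [MeasurableSpace X] [BorelSpace X]
    (μ : Measure X) [IsProbabilityMeasure μ] :
    ∃ K : Set X, IsCompact K ∧ μ K ≠ 0 := by
  rcases isEmpty_or_nonempty X with hX | hX
  · have : (univ : Set X) = ∅ := Set.univ_eq_empty_iff.2 hX
    have h1 : (1 : ℝ≥0∞) = 0 := by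
      rw [← measure_univ (μ := μ), this, measure_empty]
    simp at h1
  obtain ⟨u, hu⟩ := TopologicalSpace.exists_dense_seq X
  obtain ⟨δ, hδpos, hδsum⟩ := ENNReal.exists_pos_sum_of_countable (ε := 2⁻¹) (by norm_num) ℕ
  -- the approximating finite unions of closed balls
  set S : ℕ → ℕ → Set X := fun n N => ⋃ i ∈ Finset.range N,
    Metric.closedBall (u i) (1 / (n + 1)) with hS
  have hSclosed : ∀ n N, IsClosed (S n N) := fun n N =>
    (Finset.range N).finite_toSet.isClosed_biUnion fun i _ => Metric.isClosed_closedBall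
  have hSunion : ∀ n, (⋃ N, S n N) = univ := by
    intro n
    apply eq_univ_of_forall
    intro x
    obtain ⟨i, hi⟩ := hu.exists_dist_lt x (show (0:ℝ) < 1 / (n + 1) by positivity)
    exact mem_iUnion.2 ⟨i + 1, mem_iUnion₂.2 ⟨i, Finset.mem_range.2 (Nat.lt_succ_self i),
      Metric.mem_closedBall.2 hi.le⟩⟩
  -- choose N n with small complement
  have key : ∀ n : ℕ, ∃ N : ℕ, μ (S n N)ᶜ ≤ δ n := by
    intro n
    have hmono : Monotone (S n) := fun a b hab =>
      Set.biUnion_subset_biUnion_left (Finset.range_subset_range.2 hab)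
    have htend : Filter.Tendsto (fun N => μ (S n N)) Filter.atTop (nhds (μ (⋃ N, S n N))) :=
      tendsto_measure_iUnion_atTop hmono
    rw [hSunion n, measure_univ] at htend
    have hlt : (1 : ℝ≥0∞) - δ n < 1 :=
      ENNReal.sub_lt_self ENNReal.one_ne_top one_ne_zero (by exact_mod_cast (hδpos n).ne')
    obtain ⟨N, hN⟩ := ((tendsto_order.1 htend).1 _ hlt).exists
    refine ⟨N, ?_⟩
    have hcompl : μ (S n N)ᶜ = 1 - μ (S n N) :=
      prob_compl_eq_one_sub (hSclosed n N).measurableSet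
    rw [hcompl]
    calc 1 - μ (S n N) ≤ 1 - (1 - (δ n : ℝ≥0∞)) := tsub_le_tsub_left hN.le 1
      _ ≤ (δ n : ℝ≥0∞) := tsub_le_iff_right.2 (by rw [add_comm]; exact le_tsub_add)
  choose N hN using key
  set K : Set X := ⋂ n, S n (N n) with hK
  have hKclosed : IsClosed K := isClosed_iInter fun n => hSclosed n (N n)
  have hKcompact : IsCompact K := by
    refine TotallyBounded.isCompact_of_isClosed ?_ hKclosed
    rw [Metric.totallyBounded_iff]
    intro ε hε
    obtain ⟨n, hn⟩ := exists_nat_one_div_lt hε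
    refine ⟨u '' (Finset.range (N n) : Set ℕ), ((Finset.range (N n)).finite_toSet.image u), ?_⟩
    intro x hx
    have hx' : x ∈ S n (N n) := mem_iInter.1 hx n
    obtain ⟨i, hi, hxi⟩ := mem_iUnion₂.1 hx'
    exact mem_iUnion₂.2 ⟨u i, ⟨i, hi, rfl⟩, Metric.mem_ball.2 (lt_of_le_of_lt hxi hn)⟩
  refine ⟨K, hKcompact, fun h0 => ?_⟩
  have hKc : μ Kᶜ < 1 := by
    have : μ Kᶜ ≤ ∑' n, μ (S n (N n))ᶜ := by
      rw [hK, Set.compl_iInter]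
      exact measure_iUnion_le _
    calc μ Kᶜ ≤ ∑' n, μ (S n (N n))ᶜ := this
      _ ≤ ∑' n, (δ n : ℝ≥0∞) := ENNReal.tsum_le_tsum fun n => hN n
      _ < 2⁻¹ := hδsum
      _ < 1 := by norm_num
  have : (1 : ℝ≥0∞) ≤ μ K + μ Kᶜ := by
    rw [← measure_univ (μ := μ), ← Set.union_compl_self K]
    exact measure_union_le _ _
  rw [h0, zero_add] at this
  exact absurd this (not_le.2 hKc)

/-- In an abelian Polish group, a Borel set `A` such that every compact set admits a
translate inside `A` is not Haar null. -/
theorem not_haarNull_of_mem_F {X : Type*}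
    [TopologicalSpace X] [AddCommGroup X] [IsTopologicalAddGroup X] [PolishSpace X]
    (A : Set X) (hA : MeasurableSet[borel X] A)
    (hAF : ∀ K : Set X, IsCompact K → ∃ x : X, (fun k => k + x) '' K ⊆ A) :
    ¬ IsHaarNull A := by
  rintro ⟨μ, hprob, B, hAB, hBmeas, hnull⟩
  letI := TopologicalSpace.upgradeIsCompletelyMetrizable X
  letI : MeasurableSpace X := borel X
  haveI : BorelSpace X := ⟨rfl⟩
  haveI : IsProbabilityMeasure μ := hprob
  obtain ⟨K, hK, hKpos⟩ := exists_isCompact_measure_ne_zero μ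
  obtain ⟨x, hx⟩ := hAF K hK
  have hsub : K ⊆ (fun b => (-x) + b) '' B := by
    intro k hk
    exact ⟨k + x, hAB (hx ⟨k, hk, rfl⟩), by simp⟩
  exact hKpos (le_antisymm ((measure_mono hsub).trans (hnull (-x)).le) zero_le)
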